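/- Let V be a quadratic space over ℚ with associated bilinear form ⟨·,·⟩, and let w₋, w₊ ∈ V be isotropic vectors with ⟨w₋, w₊⟩ = −1 spanning a plane Π. Suppose the orthogonal complement Π^⊥ is positive definite. Fix a rational number d > 0 and a ℤ-lattice L₀ in V. Then there are only finitely many vectors v ∈ L₀ satisfying q(v) = d and such that ⟨v, w₋⟩ and ⟨v, w₊⟩ are both non-zero with opposite signs. -/

import Mathlib

open QuadraticMap

lemma aux_den (q : ℚ) (N : ℕ) (h : q.den ∣ N) : ∃ n : ℤ, q * N = n := by
  obtain ⟨k, hk⟩ := h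
  have hden : (q.den : ℚ) ≠ 0 := by exact_mod_cast q.den_ne_zero
  have h1 : q * q.den = q.num := by
    nth_rewrite 1 [← Rat.num_div_den q]
    exact div_mul_cancel₀ _ hden
  refine ⟨q.num * k, ?_⟩
  rw [hk]; push_cast
  rw [← mul_assoc, h1]

lemma aux_functional {V : Type*} [AddCommGroup V] [Module ℚ V]
    (L₀ : Submodule ℤ V) (hfg : L₀.FG) (φ : V →ₗ[ℚ] ℚ) :
    ∃ N : ℕ, 0 < N ∧ ∀ v ∈ L₀, ∃ n : ℤ, φ v * N = n := by
  obtain ⟨s, hs⟩ := hfg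
  refine ⟨∏ x ∈ s, (φ x).den, Finset.prod_pos fun x _ => (φ x).pos, ?_⟩
  intro v hv
  rw [← hs] at hv
  induction hv using Submodule.span_induction with
  | mem x hx => exact aux_den _ _ (Finset.dvd_prod_of_mem _ hx)
  | zero => exact ⟨0, by simp⟩
  | add x y hx hy ihx ihy =>
    obtain ⟨n, hn⟩ := ihx; obtain ⟨m, hm⟩ := ihy
    exact ⟨n + m, by rw [map_add, add_mul, hn, hm]; push_cast; ring⟩
  | smul a x hx ih =>
    obtain ⟨n, hn⟩ := ih
    refine ⟨a * n, ?_⟩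
    rw [map_zsmul, zsmul_eq_mul, mul_assoc, hn]
    push_cast; ring

lemma int_abs_le_sq (n : ℤ) : |n| ≤ n ^ 2 := by
  rcases eq_or_ne n 0 with rfl | h
  · simp
  · have h1 : 1 ≤ |n| := Int.one_le_abs h
    calc |n| = |n| * 1 := (mul_one _).symm
      _ ≤ |n| * |n| := mul_le_mul_of_nonneg_left h1 (abs_nonneg n)
      _ = n ^ 2 := by rw [← abs_mul, pow_two, abs_mul_self]

lemma aux_finite (N : ℕ) (hN : 0 < N) (C : ℚ) :
    {x : ℚ | (∃ n : ℤ, x * N = n) ∧ x ^ 2 ≤ C}.Finite := by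
  obtain ⟨M, hM⟩ : ∃ M : ℤ, C * (N : ℚ) ^ 2 ≤ M := ⟨⌈C * (N : ℚ) ^ 2⌉, Int.le_ceil _⟩
  refine Set.Finite.subset ((Set.finite_Icc (-M) M).image fun n : ℤ => (n : ℚ) / N) ?_
  rintro x ⟨⟨n, hn⟩, hx⟩
  have hNQ : (N : ℚ) ≠ 0 := by positivity
  refine ⟨n, ?_, ?_⟩
  · have hn2 : ((n : ℚ)) ^ 2 ≤ (M : ℚ) := by
      rw [← hn, mul_pow]
      exact le_trans (mul_le_mul_of_nonneg_right hx (by positivity)) hM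
    have hle' : n ^ 2 ≤ M := by exact_mod_cast hn2
    have habs : |n| ≤ M := le_trans (int_abs_le_sq n) hle'
    simpa [Set.mem_Icc] using abs_le.mp habs
  · show (n : ℚ) / N = x
    rw [← hn, mul_div_assoc, div_self hNQ, mul_one]

/-- Finiteness of lattice vectors of fixed positive length whose pairings
with the two isotropic vectors w₋, w₊ (spanning a hyperbolic plane with positive
definite orthogonal complement) are non-zero of opposite signs. -/
theorem stmt_5 {V : Type*} [AddCommGroup V] [Module ℚ V] [FiniteDimensional ℚ V]
    (Q : QuadraticForm ℚ V)
    (wm wp : V) (hm : Q wm = 0) (hp : Q wp = 0)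
    (hpair : QuadraticMap.polar (⇑Q) wm wp = -1)
    (hposdef : ∀ v : V, QuadraticMap.polar (⇑Q) v wm = 0 →
      QuadraticMap.polar (⇑Q) v wp = 0 → v ≠ 0 → 0 < Q v)
    (d : ℚ) (hd : 0 < d)
    (L₀ : Submodule ℤ V) (hfg : L₀.FG)
    (hfull : Submodule.span ℚ (L₀ : Set V) = ⊤) :
    {v : V | v ∈ L₀ ∧ Q v = d ∧
      QuadraticMap.polar (⇑Q) v wm ≠ 0 ∧ QuadraticMap.polar (⇑Q) v wp ≠ 0 ∧
      QuadraticMap.polar (⇑Q) v wm * QuadraticMap.polar (⇑Q) v wp < 0}.Finite := by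
  classical
  set f : V →ₗ[ℚ] ℚ := Q.polarBilin wm with hf
  set g : V →ₗ[ℚ] ℚ := Q.polarBilin wp with hg
  have hfv : ∀ v, f v = polar (⇑Q) v wm := fun v => polar_comm (⇑Q) wm v
  have hgv : ∀ v, g v = polar (⇑Q) v wp := fun v => polar_comm (⇑Q) wp v
  have hfwm : f wm = 0 := by
    show polar (⇑Q) wm wm = 0
    rw [polar_self, hm]; simp
  have hfwp : f wp = -1 := hpair
  have hgwm : g wm = -1 := by
    show polar (⇑Q) wp wm = -1
    rw [polar_comm]; exact hpair
  have hgwp : g wp = 0 := by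
    show polar (⇑Q) wp wp = 0
    rw [polar_self, hp]; simp
  set Qplus : QuadraticForm ℚ V :=
    Q + LinearMap.BilinMap.toQuadraticMap ((LinearMap.mul ℚ ℚ).compl₁₂ f g)
      + LinearMap.BilinMap.toQuadraticMap ((LinearMap.mul ℚ ℚ).compl₁₂ f f)
      + LinearMap.BilinMap.toQuadraticMap ((LinearMap.mul ℚ ℚ).compl₁₂ g g) with hQp
  have hQpv : ∀ v : V, Qplus v = Q v + f v * g v + f v * f v + g v * g v := by
    intro v
    simp [hQp, LinearMap.BilinMap.toQuadraticMap_apply]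
  -- the orthogonal projection to the complement of the hyperbolic plane
  have hdecomp : ∀ v : V, ∃ u : V, f u = 0 ∧ g u = 0 ∧ Q u = Q v + f v * g v ∧
      (f v = 0 → g v = 0 → u = v) := by
    intro v
    refine ⟨v + g v • wm + f v • wp, ?_, ?_, ?_, ?_⟩
    · simp only [map_add, LinearMap.map_smul, smul_eq_mul, hfwm, hfwp]; ring
    · simp only [map_add, LinearMap.map_smul, smul_eq_mul, hgwm, hgwp]; ring
    · have e1 : Q (v + g v • wm + f v • wp)
          = Q (v + g v • wm) + Q (f v • wp) + polar (⇑Q) (v + g v • wm) (f v • wp) := by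
        rw [polar]; ring
      have e2 : Q (v + g v • wm) = Q v + Q (g v • wm) + polar (⇑Q) v (g v • wm) := by
        rw [polar]; ring
      have e3 : Q (g v • wm) = g v * g v * Q wm := by
        rw [QuadraticMap.map_smul, smul_eq_mul]
      have e4 : Q (f v • wp) = f v * f v * Q wp := by
        rw [QuadraticMap.map_smul, smul_eq_mul]
      have e5 : polar (⇑Q) v (g v • wm) = g v * polar (⇑Q) v wm := by
        rw [polar_smul_right, smul_eq_mul]
      have e6 : polar (⇑Q) (v + g v • wm) (f v • wp)
          = f v * (polar (⇑Q) v wp + g v * polar (⇑Q) wm wp) := by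
        rw [polar_smul_right, polar_add_left, polar_smul_left]
        simp only [smul_eq_mul]
        try ring
      rw [e1, e2, e3, e4, e5, e6, hm, hp, hpair, ← hfv, ← hgv]
      ring
    · intro h0 h1
      rw [h0, h1]
      simp
  -- nonnegativity of Q on the orthogonal complement
  have hQnonneg : ∀ u : V, f u = 0 → g u = 0 → 0 ≤ Q u := by
    intro u hu1 hu2
    rcases eq_or_ne u 0 with rfl | hu
    · simp
    · exact le_of_lt (hposdef u (by rw [← hfv]; exact hu1) (by rw [← hgv]; exact hu2) hu)
  -- Qplus is positive definite
  have hQppos : ∀ v : V, v ≠ 0 → 0 < Qplus v := by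
    intro v hv
    obtain ⟨u, hu1, hu2, hu3, hu4⟩ := hdecomp v
    have key : Qplus v = Q u + f v * f v + g v * g v := by
      rw [hQpv, ← hu3]
    rcases eq_or_ne (f v) 0 with h0 | h0
    · rcases eq_or_ne (g v) 0 with h1 | h1
      · have := hu4 h0 h1
        subst this
        have := hposdef u (by rw [← hfv]; exact hu1) (by rw [← hgv]; exact hu2) hv
        rw [key, h0, h1]; linarith
      · have := hQnonneg u hu1 hu2
        rw [key, h0]
        linarith [mul_self_pos.mpr h1, mul_self_nonneg (f v)]
    · have := hQnonneg u hu1 hu2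
      rw [key]
      linarith [mul_self_pos.mpr h0, mul_self_nonneg (g v)]
  -- denominators for the pairings
  obtain ⟨Nf, hNf, hNf'⟩ := aux_functional L₀ hfg f
  obtain ⟨Ng, hNg, hNg'⟩ := aux_functional L₀ hfg g
  set C : ℚ := d + (d * Ng) ^ 2 + (d * Nf) ^ 2 with hC
  -- the main bound: on the set in question, Qplus is bounded by C
  have hbound : ∀ v ∈ {v : V | v ∈ L₀ ∧ Q v = d ∧
      QuadraticMap.polar (⇑Q) v wm ≠ 0 ∧ QuadraticMap.polar (⇑Q) v wp ≠ 0 ∧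
      QuadraticMap.polar (⇑Q) v wm * QuadraticMap.polar (⇑Q) v wp < 0},
      Qplus v ≤ C := by
    rintro v ⟨hvL, hvd, hvm, hvp, hvs⟩
    rw [← hfv] at hvm hvs
    rw [← hgv] at hvp hvs
    obtain ⟨u, hu1, hu2, hu3, _⟩ := hdecomp v
    have hQu : 0 ≤ Q u := hQnonneg u hu1 hu2
    have hfg0 : -d ≤ f v * g v := by rw [hu3, hvd] at hQu; linarith
    -- lower bounds on |f v|, |g v|
    obtain ⟨n, hn⟩ := hNf' v hvL
    obtain ⟨m, hmm⟩ := hNg' v hvL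
    have hn0 : n ≠ 0 := by
      intro h; rw [h] at hn; simp at hn
      rcases hn with h' | h'
      · exact hvm h'
      · exact absurd h' (by exact_mod_cast hNf.ne')
    have habsn : (1 : ℚ) ≤ |f v| * Nf := by
      have : (1 : ℚ) ≤ |(n : ℚ)| := by exact_mod_cast Int.one_le_abs hn0
      calc (1:ℚ) ≤ |(n:ℚ)| := this
        _ = |f v * Nf| := by rw [hn]
        _ = |f v| * Nf := by rw [abs_mul, abs_of_nonneg (by positivity : (0:ℚ) ≤ (Nf:ℚ))]
    have hm0 : m ≠ 0 := by
      intro h; rw [h] at hmm; simp at hmm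
      rcases hmm with h' | h'
      · exact hvp h'
      · exact absurd h' (by exact_mod_cast hNg.ne')
    have habsm : (1 : ℚ) ≤ |g v| * Ng := by
      have : (1 : ℚ) ≤ |(m : ℚ)| := by exact_mod_cast Int.one_le_abs hm0
      calc (1:ℚ) ≤ |(m:ℚ)| := this
        _ = |g v * Ng| := by rw [hmm]
        _ = |g v| * Ng := by rw [abs_mul, abs_of_nonneg (by positivity : (0:ℚ) ≤ (Ng:ℚ))]
    -- |f v| * |g v| ≤ d
    have hprod : |f v| * |g v| ≤ d := by
      rw [← abs_mul, abs_of_neg hvs]; linarith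
    have hfb : |g v| ≤ d * Nf := by
      have h1 : |g v| ≤ (|f v| * Nf) * |g v| :=
        le_mul_of_one_le_left (abs_nonneg _) habsn
      calc |g v| ≤ (|f v| * Nf) * |g v| := h1
        _ = (|f v| * |g v|) * Nf := by ring
        _ ≤ d * Nf := mul_le_mul_of_nonneg_right hprod (by positivity)
    have hgb : |f v| ≤ d * Ng := by
      have h1 : |f v| ≤ (|g v| * Ng) * |f v| :=
        le_mul_of_one_le_left (abs_nonneg _) habsm
      calc |f v| ≤ (|g v| * Ng) * |f v| := h1
        _ = (|f v| * |g v|) * Ng := by ring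
        _ ≤ d * Ng := mul_le_mul_of_nonneg_right hprod (by positivity)
    have hf2 : f v * f v ≤ (d * Ng) ^ 2 := by
      rw [← abs_mul_self (f v), abs_mul, pow_two]
      exact mul_le_mul hgb hgb (abs_nonneg _) (by positivity)
    have hg2 : g v * g v ≤ (d * Nf) ^ 2 := by
      rw [← abs_mul_self (g v), abs_mul, pow_two]
      exact mul_le_mul hfb hfb (abs_nonneg _) (by positivity)
    rw [hQpv, hvd, hC]
    linarith
  -- orthogonal basis for Qplus
  letI : Invertible (2 : ℚ) := invertibleOfNonzero two_ne_zero
  obtain ⟨e, he⟩ := LinearMap.BilinForm.exists_orthogonal_basis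
    (B := QuadraticMap.associated Qplus) ⟨QuadraticMap.associated_isSymm ℚ Qplus⟩
  have hsum : ∀ v : V, Qplus v = ∑ i, Qplus (e i) * (e.repr v i * e.repr v i) := by
    intro v
    have h1 : Qplus v = Qplus.basisRepr e fun i => e.repr v i := by
      rw [Qplus.basisRepr_apply, e.sum_repr v]
    rw [h1, QuadraticMap.basisRepr_eq_of_iIsOrtho Qplus e he,
      QuadraticMap.weightedSumSquares_apply]
    simp [smul_eq_mul]
  -- positivity of the diagonal coefficients
  have hc : ∀ i, 0 < Qplus (e i) := fun i => hQppos _ (e.ne_zero i)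
  -- denominators for the coordinate functionals
  choose N hNpos hNint using fun i => aux_functional L₀ hfg (e.coord i)
  have hinj : Function.Injective fun v : V => (fun i => e.repr v i) := by
    intro v w h
    apply e.repr.injective
    ext i
    exact congrFun h i
  refine Set.Finite.subset (Set.Finite.preimage hinj.injOn
    (Set.Finite.pi fun i => aux_finite (N i) (hNpos i) (C / Qplus (e i)))) ?_
  intro v hv
  obtain ⟨hvL, hvd, hvm, hvp, hvs⟩ := hv
  have hQb : Qplus v ≤ C := hbound v ⟨hvL, hvd, hvm, hvp, hvs⟩
  simp only [Set.mem_preimage, Set.mem_pi, Set.mem_univ, forall_true_left]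
  intro i
  refine ⟨?_, ?_⟩
  · obtain ⟨n, hn⟩ := hNint i v hvL
    exact ⟨n, by rw [← hn, Module.Basis.coord_apply]⟩
  · have hterm : Qplus (e i) * (e.repr v i * e.repr v i) ≤ C := by
      have h1 := hsum v
      have hnn : ∀ j ∈ Finset.univ, 0 ≤ Qplus (e j) * (e.repr v j * e.repr v j) :=
        fun j _ => mul_nonneg (hc j).le (mul_self_nonneg _)
      have h2 := Finset.single_le_sum hnn (Finset.mem_univ i)
      linarith
    rw [pow_two, le_div_iff₀ (hc i)]
    linarith
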